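/- Let A = (e_{ij}) be an (n+1)×n matrix with entries in ℤ ∪ {−∞}, indexed by rows 0,…,n and columns 1,…,n. For i = 0,…,n let J_i denote the Jacobi number (maximal diagonal sum over permutations) of the n×n matrix A_î obtained by deleting row i. If J_i ≥ 0 for all i, then the vector (k_0,…,k_n) = (J_0,…,J_n) satisfies the equality k_0 + k_1 + ⋯ + k_n = Σ_{j=1}^{n} max(e_{0j}+k_0, e_{1j}+k_1, …, e_{nj}+k_n), where the max and sums are computed in ℤ ∪ {−∞} with the convention (−∞) + k = −∞. -/

import Mathlib

open Finset

namespace Stmt1Aux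

lemma coe_unbot'0 {x : WithBot ℤ} (h : x ≠ ⊥) : ((x.unbotD 0 : ℤ) : WithBot ℤ) = x := by
  lift x to ℤ using h; simp

lemma term_ne_bot {ι : Type*} [DecidableEq ι] {s : Finset ι} {g : ι → WithBot ℤ}
    (h : ∑ x ∈ s, g x ≠ ⊥) {x : ι} (hx : x ∈ s) : g x ≠ ⊥ := by
  intro hb
  apply h
  rw [← Finset.add_sum_erase s g hx, hb, WithBot.bot_add]

lemma indicator_sum_prod {n : ℕ} (q : Fin (n+1) × Fin (n+1)) (u : Fin (n+1) × Fin (n+1) → ℚ) :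
    ∑ p : Fin (n+1) × Fin (n+1), (if q = p then (1:ℚ) else 0) * u p = u q := by
  simp only [ite_mul, one_mul, zero_mul, Finset.sum_ite_eq, mem_univ, if_true]

end Stmt1Aux

open Stmt1Aux


/-- For an `(n+1) × n` matrix `A` with entries in `ℤ ∪ {-∞}` (modelled as `WithBot ℤ`),
let `J i` be the Jacobi number (maximal diagonal sum over permutations) of the `n × n`
matrix obtained by deleting row `i`.  If `J i ≥ 0` for all `i`, then
`J 0 + ⋯ + Jن n = ∑_{j} max_i (A i j + J i)`. -/
theorem stmt1 (n : ℕ) (A : Matrix (Fin (n + 1)) (Fin n) (WithBot ℤ))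
    (J : Fin (n + 1) → WithBot ℤ)
    (hJ : ∀ i, J i = Finset.univ.sup' Finset.univ_nonempty
      (fun σ : Equiv.Perm (Fin n) => ∑ k, A (i.succAbove k) (σ k)))
    (hpos : ∀ i, (0 : WithBot ℤ) ≤ J i) :
    ∑ i, J i =
      ∑ j, Finset.univ.sup' Finset.univ_nonempty
        (fun i : Fin (n + 1) => A i j + J i) := by
  classical
  -- choose optimal permutations
  have hσex : ∀ i : Fin (n+1), ∃ σ : Equiv.Perm (Fin n),
      J i = ∑ k, A (i.succAbove k) (σ k) := by
    intro i
    obtain ⟨σ, -, hσ⟩ := Finset.exists_mem_eq_sup' Finset.univ_nonempty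
      (fun σ : Equiv.Perm (Fin n) => ∑ k, A (i.succAbove k) (σ k))
    exact ⟨σ, (hJ i).trans hσ⟩
  choose σ hσ using hσex
  refine le_antisymm ?easy ?hard
  case easy =>
    calc ∑ i, J i = J 0 + ∑ k, J ((0 : Fin (n+1)).succAbove k) := Fin.sum_univ_succAbove J 0
    _ = ∑ k, (A ((0 : Fin (n+1)).succAbove k) (σ 0 k) + J ((0 : Fin (n+1)).succAbove k)) := by
        rw [hσ 0, Finset.sum_add_distrib]
    _ ≤ ∑ k, Finset.univ.sup' Finset.univ_nonempty
          (fun i : Fin (n + 1) => A i (σ 0 k) + J i) := by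
        refine Finset.sum_le_sum fun k _ => ?_
        exact Finset.le_sup' (fun i : Fin (n+1) => A i (σ 0 k) + J i) (mem_univ _)
    _ = ∑ j, Finset.univ.sup' Finset.univ_nonempty
          (fun i : Fin (n + 1) => A i j + J i) :=
        Equiv.sum_comp (σ 0) (fun j => Finset.univ.sup' Finset.univ_nonempty
          (fun i : Fin (n + 1) => A i j + J i))
  case hard =>
    by_cases hbot : ∃ j : Fin n, Finset.univ.sup' Finset.univ_nonempty
        (fun i : Fin (n + 1) => A i j + J i) = ⊥
    · obtain ⟨j0, hj0⟩ := hbot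
      have : ∑ j, Finset.univ.sup' Finset.univ_nonempty
          (fun i : Fin (n + 1) => A i j + J i) = ⊥ := by
        rw [← Finset.add_sum_erase _ _ (mem_univ j0), hj0, WithBot.bot_add]
      rw [this]; exact bot_le
    push_neg at hbot
    -- argmax row for each column
    have hfex : ∀ j : Fin n, ∃ i : Fin (n+1),
        Finset.univ.sup' Finset.univ_nonempty (fun i : Fin (n + 1) => A i j + J i)
          = A i j + J i := by
      intro j
      obtain ⟨i, -, hi⟩ := Finset.exists_mem_eq_sup' Finset.univ_nonempty
        (fun i : Fin (n + 1) => A i j + J i)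
      exact ⟨i, hi⟩
    choose f hf using hfex
    have hJne : ∀ i, J i ≠ ⊥ := by
      intro i h
      have := hpos i
      rw [h] at this
      simp at this
    set a : Fin (n+1) → Fin n → ℤ := fun r j => (A r j).unbotD 0 with ha
    set jI : Fin (n+1) → ℤ := fun i => (J i).unbotD 0 with hjI
    have hJcoe : ∀ i, ((jI i : ℤ) : WithBot ℤ) = J i := fun i => coe_unbot'0 (hJne i)
    have hAterm : ∀ i k, A (i.succAbove k) (σ i k) ≠ ⊥ := fun i k =>
      term_ne_bot (g := fun k => A (i.succAbove k) (σ i k)) (by rw [← hσ i]; exact hJne i) (mem_univ k)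
    have hfA : ∀ j, A (f j) j ≠ ⊥ := by
      intro j h
      exact hbot j (by rw [hf j, h, WithBot.bot_add])
    have hAcoe : ∀ i k, ((a (i.succAbove k) (σ i k) : ℤ) : WithBot ℤ)
        = A (i.succAbove k) (σ i k) := fun i k => coe_unbot'0 (hAterm i k)
    have hJsum : ∀ i, jI i = ∑ k, a (i.succAbove k) (σ i k) := by
      intro i
      have h : ((jI i : ℤ) : WithBot ℤ) = ((∑ k, a (i.succAbove k) (σ i k) : ℤ) : WithBot ℤ) := by
        rw [hJcoe, hσ i]
        push_cast
        exact Finset.sum_congr rfl fun k _ => (hAcoe i k).symm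
      exact_mod_cast h
    -- the edge multiset, as count function
    set e : Fin n → Fin (n+1) → Fin (n+1) × Fin (n+1) := fun j t =>
      Fin.lastCases (f j, j.castSucc) (fun k => ((f j).succAbove k, ((σ (f j)) k).castSucc)) t
      with he
    set cnt : Fin (n+1) × Fin (n+1) → ℚ := fun p =>
      (if p.2 = Fin.last n then 1 else 0) + ∑ j, ∑ t, (if e j t = p then 1 else 0) with hcnt
    have core : ∀ u : Fin (n+1) × Fin (n+1) → ℚ,
        ∑ p : Fin (n+1) × Fin (n+1), cnt p * u p
          = (∑ r, u (r, Fin.last n)) + ∑ j, ∑ t, u (e j t) := by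
      intro u
      simp only [hcnt, add_mul, Finset.sum_add_distrib, Finset.sum_mul]
      congr 1
      · rw [Fintype.sum_prod_type (f := fun p : Fin (n+1) × Fin (n+1) =>
          (if p.2 = Fin.last n then (1:ℚ) else 0) * u p)]
        refine Finset.sum_congr rfl fun r _ => ?_
        simp only [ite_mul, one_mul, zero_mul, Finset.sum_ite_eq', mem_univ, if_true]
      · rw [Finset.sum_comm]
        refine Finset.sum_congr rfl fun j _ => ?_
        rw [Finset.sum_comm]
        exact Finset.sum_congr rfl fun t _ => indicator_sum_prod (e j t) u
    have hrow1 : ∀ (j : Fin n) (r0 : Fin (n+1)),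
        ∑ t, (if (e j t).1 = r0 then (1:ℚ) else 0) = 1 := by
      intro j r0
      rw [Fin.sum_univ_castSucc]
      simp only [he, Fin.lastCases_castSucc, Fin.lastCases_last]
      have h := Fin.sum_univ_succAbove (fun i : Fin (n+1) => if i = r0 then (1:ℚ) else 0) (f j)
      simp only [Finset.sum_ite_eq', mem_univ, if_true] at h
      rw [add_comm] at h
      exact h.symm
    have hcol1 : ∀ (j : Fin n) (c0 : Fin (n+1)),
        ∑ t, (if (e j t).2 = c0 then (1:ℚ) else 0)
          = (∑ k : Fin n, if Fin.castSucc k = c0 then (1:ℚ) else 0)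
            + (if Fin.castSucc j = c0 then (1:ℚ) else 0) := by
      intro j c0
      rw [Fin.sum_univ_castSucc]
      simp only [he, Fin.lastCases_castSucc, Fin.lastCases_last]
      congr 1
      exact Equiv.sum_comp (σ (f j)) (fun k : Fin n => if Fin.castSucc k = c0 then (1:ℚ) else 0)
    have hkey : ∀ c0 : Fin (n+1),
        (∑ k : Fin n, if Fin.castSucc k = c0 then (1:ℚ) else 0)
          + (if Fin.last n = c0 then (1:ℚ) else 0) = 1 := by
      intro c0
      have h := Fin.sum_univ_castSucc (fun x : Fin (n+1) => if x = c0 then (1:ℚ) else 0)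
      simp only [Finset.sum_ite_eq', mem_univ, if_true] at h
      exact h.symm
    have hrowsum : ∀ r0 : Fin (n+1), ∑ c, cnt (r0, c) = (n : ℚ) + 1 := by
      intro r0
      have h := core (fun p => if p.1 = r0 then 1 else 0)
      have hL : ∑ p : Fin (n+1) × Fin (n+1), cnt p * (if p.1 = r0 then (1:ℚ) else 0)
          = ∑ c, cnt (r0, c) := by
        rw [Fintype.sum_prod_type, Finset.sum_comm]
        simp only [mul_ite, mul_one, mul_zero, Finset.sum_ite_eq', mem_univ, if_true]
      rw [hL] at h
      simp only [Finset.sum_ite_eq', mem_univ, if_true, hrow1, Finset.sum_const, card_univ,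
        Fintype.card_fin, nsmul_eq_mul, mul_one] at h
      rw [h]; ring
    have hcolsum : ∀ c0 : Fin (n+1), ∑ r, cnt (r, c0) = (n : ℚ) + 1 := by
      intro c0
      have h := core (fun p => if p.2 = c0 then 1 else 0)
      have hL : ∑ p : Fin (n+1) × Fin (n+1), cnt p * (if p.2 = c0 then (1:ℚ) else 0)
          = ∑ r, cnt (r, c0) := by
        rw [Fintype.sum_prod_type]
        simp only [mul_ite, mul_one, mul_zero, Finset.sum_ite_eq', mem_univ, if_true]
      rw [hL] at h
      rw [h]
      dsimp only
      rw [Finset.sum_congr rfl (fun j (_ : j ∈ univ) => hcol1 j c0)]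
      simp only [Finset.sum_add_distrib, Finset.sum_const, card_univ, Fintype.card_fin,
        nsmul_eq_mul]
      have hk := hkey c0
      set S := ∑ k : Fin n, if Fin.castSucc k = c0 then (1:ℚ) else 0 with hS
      have hL2 : (if Fin.last n = c0 then (1:ℚ) else 0) = 1 - S := by linarith
      simp only [hL2, Finset.sum_const, card_univ, Fintype.card_fin, nsmul_eq_mul]; push_cast; ring
    set v : Fin (n+1) × Fin (n+1) → ℚ := fun p =>
      if h : p.2 = Fin.last n then 0 else (a p.1 (p.2.castPred h) : ℚ) with hv
    have hvcast : ∀ (r : Fin (n+1)) (y : Fin n), v (r, Fin.castSucc y) = (a r y : ℚ) := by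
      intro r y
      have : v (r, Fin.castSucc y)
          = if h : (Fin.castSucc y : Fin (n+1)) = Fin.last n then 0
            else (a r ((Fin.castSucc y).castPred h) : ℚ) := rfl
      rw [this, dif_neg (Fin.castSucc_lt_last y).ne]
      simp [Fin.castPred_castSucc]
    have hvlast : ∀ r : Fin (n+1), v (r, Fin.last n) = 0 := fun r => dif_pos rfl
    have hT : ∑ p : Fin (n+1) × Fin (n+1), cnt p * v p
        = ∑ j, ((a (f j) j : ℚ) + (jI (f j) : ℚ)) := by
      rw [core v]
      have h0 : ∀ r : Fin (n+1), v (r, Fin.last n) = 0 := hvlast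
      simp only [h0, Finset.sum_const_zero, zero_add]
      refine Finset.sum_congr rfl fun j _ => ?_
      rw [Fin.sum_univ_castSucc]
      simp only [he, Fin.lastCases_castSucc, Fin.lastCases_last, hvcast]
      rw [hJsum (f j)]
      push_cast
      ring
    have hsnd : ∀ (j : Fin n) (t : Fin (n+1)), ∃ y : Fin n, (e j t).2 = Fin.castSucc y := by
      intro j t
      induction t using Fin.lastCases with
      | last => exact ⟨j, by simp only [he, Fin.lastCases_last]⟩
      | cast k => exact ⟨σ (f j) k, by simp only [he, Fin.lastCases_castSucc]⟩
    have hlastcnt : ∀ r : Fin (n+1), cnt (r, Fin.last n) = 1 := by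
      intro r
      have h1 : cnt (r, Fin.last n)
          = (if (Fin.last n : Fin (n+1)) = Fin.last n then (1:ℚ) else 0)
            + ∑ j, ∑ t, (if e j t = (r, Fin.last n) then (1:ℚ) else 0) := rfl
      rw [h1, if_pos rfl]
      have h2 : ∀ (j : Fin n) (t : Fin (n+1)),
          (if e j t = (r, Fin.last n) then (1:ℚ) else 0) = 0 := by
        intro j t
        rw [if_neg]
        intro hcontr
        obtain ⟨y, hy⟩ := hsnd j t
        rw [hcontr] at hy
        exact (Fin.castSucc_lt_last y).ne' hy
      simp only [h2, Finset.sum_const_zero, add_zero]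
    have hedge : ∀ (r : Fin (n+1)) (y : Fin n), 0 < cnt (r, Fin.castSucc y) → A r y ≠ ⊥ := by
      intro r y hposc hb
      have h1 : cnt (r, Fin.castSucc y)
          = (if (Fin.castSucc y : Fin (n+1)) = Fin.last n then (1:ℚ) else 0)
            + ∑ j, ∑ t, (if e j t = (r, Fin.castSucc y) then (1:ℚ) else 0) := rfl
      rw [h1, if_neg (Fin.castSucc_lt_last y).ne, zero_add] at hposc
      obtain ⟨j, -, hj⟩ := Finset.exists_ne_zero_of_sum_ne_zero (ne_of_gt hposc)
      obtain ⟨t, -, ht⟩ := Finset.exists_ne_zero_of_sum_ne_zero hj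
      have hte : e j t = (r, Fin.castSucc y) := by
        by_contra hcon
        rw [if_neg hcon] at ht
        exact ht rfl
      clear ht hj
      induction t using Fin.lastCases with
      | last =>
        rw [he] at hte
        simp only [Fin.lastCases_last] at hte
        simp only [Prod.mk.injEq] at hte
        obtain ⟨h1', h2'⟩ := hte
        have hjy : j = y := Fin.castSucc_injective _ h2'
        apply hfA j
        rw [h1', hjy]
        exact hb
      | cast k =>
        rw [he] at hte
        simp only [Fin.lastCases_castSucc] at hte
        simp only [Prod.mk.injEq] at hte
        obtain ⟨h1', h2'⟩ := hte
        have hky : σ (f j) k = y := Fin.castSucc_injective _ h2'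
        apply hAterm (f j) k
        rw [h1', hky]
        exact hb
    have hcnt0 : ∀ p : Fin (n+1) × Fin (n+1), 0 ≤ cnt p := by
      intro p
      refine add_nonneg ?_ (Finset.sum_nonneg fun j _ => Finset.sum_nonneg fun t _ => ?_)
      · split <;> norm_num
      · split <;> norm_num
    have hn1 : ((n:ℚ) + 1) ≠ 0 := by positivity
    set M : Matrix (Fin (n+1)) (Fin (n+1)) ℚ := fun r c => cnt (r, c) / ((n:ℚ)+1) with hM
    have hMds : M ∈ doublyStochastic ℚ (Fin (n+1)) := by
      rw [mem_doublyStochastic_iff_sum]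
      refine ⟨fun i j => div_nonneg (hcnt0 _) (by positivity), fun i => ?_, fun j => ?_⟩
      · rw [hM]
        dsimp only
        rw [← Finset.sum_div, hrowsum i, div_self hn1]
      · rw [hM]
        dsimp only
        rw [← Finset.sum_div, hcolsum j, div_self hn1]
    obtain ⟨w, hw0, hw1, hwM⟩ := exists_eq_sum_perm_of_mem_doublyStochastic hMds
    have hMw : ∀ r c : Fin (n+1), M r c
        = ∑ π : Equiv.Perm (Fin (n+1)), w π * (if π r = c then 1 else 0) := by
      intro r c
      rw [← hwM]
      simp [Matrix.sum_apply, Matrix.smul_apply, smul_eq_mul, Equiv.Perm.permMatrix,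
        PEquiv.toMatrix_apply, Equiv.toPEquiv_apply]
    have hbound : ∀ π : Equiv.Perm (Fin (n+1)),
        w π * (∑ r, v (r, π r)) ≤ w π * (jI (π⁻¹ (Fin.last n)) : ℚ) := by
      intro π
      rcases eq_or_lt_of_le (hw0 π) with h0 | hposw
      · rw [← h0, zero_mul, zero_mul]
      refine mul_le_mul_of_nonneg_left ?_ (hw0 π)
      have hcntpos : ∀ r, 0 < cnt (r, π r) := by
        intro r
        have hMr : w π ≤ M r (π r) := by
          rw [hMw r (π r)]
          have hs := Finset.single_le_sum
            (f := fun π' : Equiv.Perm (Fin (n+1)) => w π' * (if π' r = π r then 1 else 0))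
            (fun π' _ => by
              split
              · simpa using hw0 π'
              · simp)
            (mem_univ π)
          simpa using hs
        have hMpos : 0 < M r (π r) := lt_of_lt_of_le hposw hMr
        rcases (hcnt0 (r, π r)).lt_or_eq with h | h
        · exact h
        · exfalso
          rw [hM] at hMpos
          dsimp only at hMpos
          rw [← h, zero_div] at hMpos
          exact lt_irrefl 0 hMpos
      set r0 := π⁻¹ (Fin.last n) with hr0
      have hπr0 : π r0 = Fin.last n := Equiv.apply_symm_apply π _
      have hne : ∀ k : Fin n, π (r0.succAbove k) ≠ Fin.last n := by
        intro k h
        have h2 : r0.succAbove k = r0 := by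
          apply π.injective
          rw [h, hπr0]
        exact Fin.succAbove_ne r0 k h2
      set τ : Fin n → Fin n := fun k => (π (r0.succAbove k)).castPred (hne k) with hτ
      have hτc : ∀ k, Fin.castSucc (τ k) = π (r0.succAbove k) :=
        fun k => Fin.castSucc_castPred _ _
      have hτinj : Function.Injective τ := by
        intro k1 k2 h
        have h2 : π (r0.succAbove k1) = π (r0.succAbove k2) := by
          rw [← hτc, ← hτc, h]
        exact Fin.succAbove_right_injective (π.injective h2)
      have hAτ : ∀ k, A (r0.succAbove k) (τ k) ≠ ⊥ := by
        intro k
        apply hedge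
        rw [hτc k]
        exact hcntpos _
      have hZ : ((∑ k, a (r0.succAbove k) (τ k) : ℤ) : WithBot ℤ)
          ≤ ((jI r0 : ℤ) : WithBot ℤ) := by
        push_cast
        calc ∑ k, ((a (r0.succAbove k) (τ k) : ℤ) : WithBot ℤ)
            = ∑ k, A (r0.succAbove k) (τ k) :=
              Finset.sum_congr rfl fun k _ => coe_unbot'0 (hAτ k)
          _ = ∑ k, A (r0.succAbove k)
                ((Equiv.ofBijective τ ((Finite.injective_iff_bijective).1 hτinj)) k) := rfl
          _ ≤ J r0 := by
              rw [hJ r0]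
              exact Finset.le_sup'
                (fun σ' : Equiv.Perm (Fin n) => ∑ k, A (r0.succAbove k) (σ' k)) (mem_univ _)
          _ = ((jI r0 : ℤ) : WithBot ℤ) := (hJcoe r0).symm
      have hZ' : (∑ k, a (r0.succAbove k) (τ k)) ≤ jI r0 := by exact_mod_cast hZ
      calc ∑ r, v (r, π r)
          = v (r0, π r0) + ∑ k, v (r0.succAbove k, π (r0.succAbove k)) :=
            Fin.sum_univ_succAbove (fun r => v (r, π r)) r0
        _ = ∑ k, (a (r0.succAbove k) (τ k) : ℚ) := by
            rw [hπr0, hvlast, zero_add]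
            exact Finset.sum_congr rfl fun k _ => by rw [← hτc k, hvcast]
        _ ≤ (jI r0 : ℚ) := by exact_mod_cast hZ'
    have hTw : ∑ p : Fin (n+1) × Fin (n+1), cnt p * v p
        = ((n:ℚ)+1) * ∑ π : Equiv.Perm (Fin (n+1)), w π * (∑ r, v (r, π r)) := by
      have hc : ∀ p : Fin (n+1) × Fin (n+1), cnt p = ((n:ℚ)+1) * M p.1 p.2 := by
        intro p
        rw [hM]
        dsimp only
        rw [mul_div_cancel₀ _ hn1]
      calc ∑ p : Fin (n+1) × Fin (n+1), cnt p * v p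
          = ∑ p : Fin (n+1) × Fin (n+1), ((n:ℚ)+1) * (M p.1 p.2 * v p) := by
            refine Finset.sum_congr rfl fun p _ => ?_
            rw [hc p]; ring
        _ = ((n:ℚ)+1) * ∑ p : Fin (n+1) × Fin (n+1), M p.1 p.2 * v p := by
            rw [← Finset.mul_sum]
        _ = _ := by
            congr 1
            calc ∑ p : Fin (n+1) × Fin (n+1), M p.1 p.2 * v p
                = ∑ p : Fin (n+1) × Fin (n+1), ∑ π : Equiv.Perm (Fin (n+1)),
                    w π * ((if π p.1 = p.2 then 1 else 0) * v p) := by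
                  refine Finset.sum_congr rfl fun p _ => ?_
                  rw [hMw p.1 p.2, Finset.sum_mul]
                  exact Finset.sum_congr rfl fun π _ => mul_assoc _ _ _
              _ = ∑ π : Equiv.Perm (Fin (n+1)), ∑ p : Fin (n+1) × Fin (n+1),
                    w π * ((if π p.1 = p.2 then 1 else 0) * v p) := Finset.sum_comm
              _ = ∑ π : Equiv.Perm (Fin (n+1)), w π * (∑ r, v (r, π r)) := by
                  refine Finset.sum_congr rfl fun π _ => ?_
                  rw [← Finset.mul_sum]
                  congr 1
                  rw [Fintype.sum_prod_type]
                  dsimp only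
                  simp only [ite_mul, one_mul, zero_mul, Finset.sum_ite_eq, mem_univ, if_true]
    have step3 : ∑ π : Equiv.Perm (Fin (n+1)), w π * (jI (π⁻¹ (Fin.last n)) : ℚ)
        = ∑ i, (1/((n:ℚ)+1)) * (jI i : ℚ) := by
      have hrw : ∀ π : Equiv.Perm (Fin (n+1)), w π * (jI (π⁻¹ (Fin.last n)) : ℚ)
          = ∑ i, (w π * (if π i = Fin.last n then 1 else 0)) * (jI i : ℚ) := by
        intro π
        symm
        calc ∑ i, (w π * (if π i = Fin.last n then 1 else 0)) * (jI i : ℚ)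
            = ∑ i, (if i = π⁻¹ (Fin.last n) then w π * (jI i : ℚ) else 0) := by
              refine Finset.sum_congr rfl fun i _ => ?_
              by_cases h : i = π⁻¹ (Fin.last n)
              · rw [if_pos h, if_pos (by rw [h]; exact Equiv.apply_symm_apply π _)]
                ring
              · rw [if_neg h, if_neg (fun hc => h ?_)]
                · ring
                · rw [← hc]
                  exact (Equiv.symm_apply_apply π i).symm
          _ = w π * (jI (π⁻¹ (Fin.last n)) : ℚ) := by
              rw [Finset.sum_ite_eq' univ (π⁻¹ (Fin.last n))
                (fun i => w π * (jI i : ℚ))]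
              simp
      calc ∑ π : Equiv.Perm (Fin (n+1)), w π * (jI (π⁻¹ (Fin.last n)) : ℚ)
          = ∑ π : Equiv.Perm (Fin (n+1)), ∑ i,
              (w π * (if π i = Fin.last n then 1 else 0)) * (jI i : ℚ) :=
            Finset.sum_congr rfl fun π _ => hrw π
        _ = ∑ i, ∑ π : Equiv.Perm (Fin (n+1)),
              (w π * (if π i = Fin.last n then 1 else 0)) * (jI i : ℚ) :=
            Finset.sum_comm
        _ = ∑ i, (1/((n:ℚ)+1)) * (jI i : ℚ) := by
            refine Finset.sum_congr rfl fun i _ => ?_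
            rw [← Finset.sum_mul, ← hMw i (Fin.last n)]
            congr 1
            rw [hM]
            dsimp only
            rw [hlastcnt i]
    have hQ : ∑ j, ((a (f j) j : ℚ) + (jI (f j) : ℚ)) ≤ ∑ i, (jI i : ℚ) := by
      rw [← hT, hTw]
      calc ((n:ℚ)+1) * ∑ π : Equiv.Perm (Fin (n+1)), w π * (∑ r, v (r, π r))
          ≤ ((n:ℚ)+1) * ∑ π : Equiv.Perm (Fin (n+1)), w π * (jI (π⁻¹ (Fin.last n)) : ℚ) :=
            mul_le_mul_of_nonneg_left (Finset.sum_le_sum fun π _ => hbound π) (by positivity)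
        _ = ∑ i, (jI i : ℚ) := by
            rw [step3, Finset.mul_sum]
            refine Finset.sum_congr rfl fun i _ => ?_
            field_simp
    have hZfinal : ∑ j, (a (f j) j + jI (f j)) ≤ ∑ i, jI i := by exact_mod_cast hQ
    calc ∑ j, Finset.univ.sup' Finset.univ_nonempty (fun i : Fin (n + 1) => A i j + J i)
        = ∑ j, (A (f j) j + J (f j)) := Finset.sum_congr rfl fun j _ => hf j
      _ = ∑ j, (((a (f j) j : ℤ) : WithBot ℤ) + ((jI (f j) : ℤ) : WithBot ℤ)) := by
          refine Finset.sum_congr rfl fun j _ => ?_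
          rw [← coe_unbot'0 (hfA j), ← hJcoe]
      _ = ((∑ j, (a (f j) j + jI (f j)) : ℤ) : WithBot ℤ) := by push_cast; rfl
      _ ≤ ((∑ i, jI i : ℤ) : WithBot ℤ) := WithBot.coe_le_coe.2 hZfinal
      _ = ∑ i, J i := by
          push_cast
          exact Finset.sum_congr rfl fun i _ => hJcoe i
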